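/- Let V be a finite set with n elements, and let V₁, V₂ ⊆ V with V₁ ∪ V₂ = V and V₁ ∩ V₂ = {s}. Let X₁ ⊆ V₁ and X₂ ⊆ V₂, and let A be the symmetric integer matrix indexed by V which agrees with the F-matrix F[X₁, V₁ ∖ X₁] on entries with both indices in V₁, agrees with the F-matrix F[X₂, V₂ ∖ X₂] on entries with both indices in V₂, and is 0 on all entries with one index in V₁ ∖ {s} and the other in V₂ ∖ {s}. Then A is ℤ-equivalent to the Cartan matrix of type A_n. -/

import Mathlib

open Matrix

/-- `A` and `A'` are ℤ-equivalent: `A' = Mᵀ·A·M` for some `M` invertible over ℤ. -/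
def ZEquiv {V : Type*} [Fintype V] [DecidableEq V] (A A' : Matrix V V ℤ) : Prop :=
  ∃ M N : Matrix V V ℤ, M * N = 1 ∧ N * M = 1 ∧ A' = Mᵀ * A * M

/-- The Cartan matrix of Dynkin type `A_n`. -/
def CartanA (n : ℕ) : Matrix (Fin n) (Fin n) ℤ :=
  fun i j => if i = j then 2
    else if (i : ℕ) + 1 = j ∨ (j : ℕ) + 1 = i then -1
    else 0

/-- The matrix indexed by `V` that agrees with the F-matrix `F[X₁, V₁ ∖ X₁]` on entries with
both indices in `V₁`, agrees with the F-matrix `F[X₂, V₂ ∖ X₂]` on entries with both indices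
in `V₂`, and is `0` on all remaining (mixed) off-diagonal entries.  (Recall that the F-matrix
`F[X,Y]` has diagonal entries `2`, entry `+1` between two distinct vertices in the same part,
and entry `-1` between two vertices in different parts.) -/
def glue2 {V : Type*} [DecidableEq V] (V₁ V₂ X₁ X₂ : Finset V) : Matrix V V ℤ :=
  fun i j =>
    if i = j then 2
    else if i ∈ V₁ ∧ j ∈ V₁ then (if (i ∈ X₁ ↔ j ∈ X₁) then 1 else -1)
    else if i ∈ V₂ ∧ j ∈ V₂ then (if (i ∈ X₂ ↔ j ∈ X₂) then 1 else -1)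
    else 0

section aux
variable (n : ℕ)

def iot : Option (Fin n) → ℕ := fun c => Option.elim c n Fin.val

lemma iot_le (c : Option (Fin n)) : iot n c ≤ n := by
  cases c with
  | none => simp [iot]
  | some j => simpa [iot] using j.isLt.le

lemma iot_inj {c d : Option (Fin n)} (h : iot n c = iot n d) : c = d := by
  cases c with
  | none => cases d with
    | none => rfl
    | some j => exact absurd h.symm (by simp [iot]; exact j.isLt.ne)
  | some i => cases d with
    | none => exact absurd h (by simp [iot]; exact i.isLt.ne)
    | some j => simp [iot] at h; simp [Fin.ext_iff, h]

def bet : Fin (n+1) → Option (Fin n) := fun k => if h : (k:ℕ) < n then some ⟨k, h⟩ else none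

lemma iot_bet (k : Fin (n+1)) : iot n (bet n k) = k := by
  unfold bet
  split
  · simp [iot]
  · simp [iot]; omega

lemma eq_bet_iff (c : Option (Fin n)) (k : Fin (n+1)) : c = bet n k ↔ iot n c = (k:ℕ) :=
  ⟨fun h => h ▸ iot_bet n k, fun h => iot_inj n (h.trans (iot_bet n k).symm)⟩

lemma sum_ind (t : ℕ) (v : Fin n → ℤ) :
    ∑ k : Fin n, (if t = (k:ℕ) then v k else 0) = if h : t < n then v ⟨t, h⟩ else 0 := by
  split
  · next h =>
    rw [Finset.sum_eq_single (⟨t, h⟩ : Fin n)]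
    · simp
    · intro b _ hb
      rw [if_neg]
      intro he
      exact hb (by simp [Fin.ext_iff, ← he])
    · intro hb; exact absurd (Finset.mem_univ _) hb
  · next h =>
    apply Finset.sum_eq_zero
    intro k _
    rw [if_neg]
    exact fun he => h (he ▸ k.isLt)

lemma sum_ind2 (t : ℕ) (v : Fin n → ℤ) :
    ∑ k : Fin n, (if t = (k:ℕ)+1 then v k else 0) =
      if h : 0 < t ∧ t ≤ n then v ⟨t-1, by omega⟩ else 0 := by
  split
  · next h =>
    rw [Finset.sum_eq_single (⟨t-1, by omega⟩ : Fin n)]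
    · rw [if_pos (show t = ((⟨t-1, by omega⟩ : Fin n):ℕ)+1 by simp; omega)]
    · intro b _ hb
      rw [if_neg]
      intro he
      exact hb (by simp [Fin.ext_iff]; omega)
    · intro hb; exact absurd (Finset.mem_univ _) hb
  · next h =>
    apply Finset.sum_eq_zero
    intro k _
    rw [if_neg]
    have := k.isLt
    omega

lemma sum_opt_delta (a : Option (Fin n)) (v : Option (Fin n) → ℤ) :
    ∑ c : Option (Fin n), (if c = a then v c else 0) = v a := by
  simp [Finset.sum_ite_eq' Finset.univ a v]

lemma sum_iot (t : ℕ) (v : Option (Fin n) → ℤ) :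
    ∑ c : Option (Fin n), (if iot n c = t then v c else 0) =
      if h : t ≤ n then v (bet n ⟨t, by omega⟩) else 0 := by
  split
  · next h =>
    have key : ∀ c : Option (Fin n), (iot n c = t) ↔ (c = bet n ⟨t, by omega⟩) := by
      intro c; rw [eq_bet_iff]
    simp only [key]
    exact sum_opt_delta n _ v
  · next h =>
    apply Finset.sum_eq_zero
    intro c _
    rw [if_neg]
    have := iot_le n c
    omega

end aux
section aux2
variable (n : ℕ) (V₁ : Finset (Fin n)) (s : Fin n)

/-- chain basis vectors `e_{β k} - e_{β (k+1)}` as columns -/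
def matA : Matrix (Option (Fin n)) (Fin n) ℤ :=
  fun c k => (if iot n c = (k:ℕ) then 1 else 0) - (if iot n c = (k:ℕ)+1 then 1 else 0)

def ff : Fin n → Option (Fin n) := fun i => if i ∈ V₁ then some s else none
def gg : Fin n → Option (Fin n) := fun i => if i = s then none else some i

/-- glued tree basis vectors `e_{ff i} - e_{gg i}` as columns -/
def matE : Matrix (Option (Fin n)) (Fin n) ℤ :=
  fun c i => (if c = ff n V₁ s i then 1 else 0) - (if c = gg n s i then 1 else 0)

def matM : Matrix (Fin n) (Fin n) ℤ :=
  fun k i => (if iot n (ff n V₁ s i) ≤ (k:ℕ) then (1:ℤ) else 0)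
    - (if iot n (gg n s i) ≤ (k:ℕ) then 1 else 0)

def matR : Option (Fin n) → Fin n → ℤ := fun c i =>
  match c with
  | none => 0
  | some j => if j ∈ V₁ then (if i = s then 1 else 0) - (if i = j ∧ ¬ j = s then 1 else 0)
      else -(if i = j then 1 else 0)

def matN : Matrix (Fin n) (Fin n) ℤ :=
  fun i k => matR n V₁ s (bet n k.castSucc) i - matR n V₁ s (bet n k.succ) i

lemma rowA_dot (c d : Option (Fin n)) :
    ∑ k : Fin n, matA n c k * (if iot n d ≤ (k:ℕ) then (1:ℤ) else 0) =
      (if c = d then 1 else 0) - (if c = none then 1 else 0) := by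
  have expand : ∀ k : Fin n, matA n c k * (if iot n d ≤ (k:ℕ) then (1:ℤ) else 0) =
      (if iot n c = (k:ℕ) then (if iot n d ≤ (k:ℕ) then (1:ℤ) else 0) else 0)
      - (if iot n c = (k:ℕ)+1 then (if iot n d ≤ (k:ℕ) then (1:ℤ) else 0) else 0) := by
    intro k; unfold matA; split_ifs <;> ring
  rw [Finset.sum_congr rfl (fun k _ => expand k), Finset.sum_sub_distrib,
    sum_ind n (iot n c) (fun k => if iot n d ≤ (k:ℕ) then (1:ℤ) else 0),
    sum_ind2 n (iot n c) (fun k => if iot n d ≤ (k:ℕ) then (1:ℤ) else 0)]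
  have hcd : (c = d) ↔ (iot n c = iot n d) := ⟨fun h => h ▸ rfl, iot_inj n⟩
  have hcn : (c = none) ↔ (iot n c = n) :=
    ⟨fun h => h ▸ rfl, fun h => iot_inj n (by simpa [iot] using h)⟩
  have h1 := iot_le n c; have h2 := iot_le n d
  simp only [hcd, hcn]
  split_ifs <;> simp_all <;> omega

lemma E_eq : matE n V₁ s = matA n * matM n V₁ s := by
  ext c i
  rw [Matrix.mul_apply]
  have expand : ∀ k : Fin n, matA n c k * matM n V₁ s k i
      = matA n c k * (if iot n (ff n V₁ s i) ≤ (k:ℕ) then (1:ℤ) else 0)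
        - matA n c k * (if iot n (gg n s i) ≤ (k:ℕ) then (1:ℤ) else 0) := by
    intro k; unfold matM; ring
  rw [Finset.sum_congr rfl (fun k _ => expand k), Finset.sum_sub_distrib,
    rowA_dot, rowA_dot]
  unfold matE; ring

end aux2
section aux3
variable (n : ℕ) (V₁ : Finset (Fin n)) (s : Fin n)

lemma R_dot (hs : s ∈ V₁) (c c' : Option (Fin n)) :
    ∑ i : Fin n, matE n V₁ s c' i * matR n V₁ s c i =
      (if c' = c then 1 else 0) - (if c' = none then 1 else 0) := by
  match c with
  | none =>
    simp [matR]
  | some j =>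
    by_cases hj : j ∈ V₁
    · by_cases hjs : j = s
      · have e : ∀ i, matE n V₁ s c' i * matR n V₁ s (some j) i
            = (if i = s then matE n V₁ s c' i else 0) := by
          intro i
          have hR : matR n V₁ s (some j) i = (if i = s then 1 else 0) := by
            simp [matR, hj, hjs, hs]
          rw [hR]; split_ifs <;> ring
        rw [Finset.sum_congr rfl (fun i _ => e i), Finset.sum_ite_eq' Finset.univ s]
        simp only [Finset.mem_univ, if_pos]
        simp [matE, ff, gg, hs, hjs]
      · have e : ∀ i, matE n V₁ s c' i * matR n V₁ s (some j) i
            = (if i = s then matE n V₁ s c' i else 0)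
              - (if i = j then matE n V₁ s c' i else 0) := by
          intro i
          have hR : matR n V₁ s (some j) i
              = (if i = s then 1 else 0) - (if i = j then 1 else 0) := by
            simp [matR, hj, hjs]
          rw [hR]; split_ifs <;> ring
        rw [Finset.sum_congr rfl (fun i _ => e i), Finset.sum_sub_distrib,
          Finset.sum_ite_eq' Finset.univ s, Finset.sum_ite_eq' Finset.univ j]
        simp only [Finset.mem_univ, if_pos]
        have hsj : ¬ (s = j) := fun h => hjs h.symm
        simp only [matE, ff, gg, hs, hj, hjs, hsj, if_pos, if_neg, ite_true, ite_false,
          if_true, if_false]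
        ring
    · have hjs : ¬ j = s := fun h => hj (h ▸ hs)
      have e : ∀ i, matE n V₁ s c' i * matR n V₁ s (some j) i
          = -(if i = j then matE n V₁ s c' i else 0) := by
        intro i
        have hR : matR n V₁ s (some j) i = -(if i = j then 1 else 0) := by
          simp [matR, hj]
        rw [hR]; split_ifs <;> ring
      rw [Finset.sum_congr rfl (fun i _ => e i), Finset.sum_neg_distrib,
        Finset.sum_ite_eq' Finset.univ j]
      simp only [Finset.mem_univ, if_pos]
      simp only [matE, ff, gg, hj, hjs, if_neg, ite_false, if_false]
      ring

lemma A_eq (hs : s ∈ V₁) : matA n = matE n V₁ s * matN n V₁ s := by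
  ext c k
  rw [Matrix.mul_apply]
  have expand : ∀ i, matE n V₁ s c i * matN n V₁ s i k
      = matE n V₁ s c i * matR n V₁ s (bet n k.castSucc) i
        - matE n V₁ s c i * matR n V₁ s (bet n k.succ) i := by
    intro i; unfold matN; ring
  rw [Finset.sum_congr rfl (fun i _ => expand i), Finset.sum_sub_distrib,
    R_dot n V₁ s hs, R_dot n V₁ s hs]
  have h1 : (c = bet n k.castSucc) ↔ iot n c = (k:ℕ) := by
    rw [eq_bet_iff]; simp
  have h2 : (c = bet n k.succ) ↔ iot n c = (k:ℕ)+1 := by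
    rw [eq_bet_iff]; simp
  simp only [h1, h2]
  unfold matA; ring

lemma sum_iot_pair (t₁ t₂ : ℕ) :
    ∑ c : Option (Fin n), (if iot n c = t₁ then (1:ℤ) else 0) * (if iot n c = t₂ then 1 else 0)
      = if t₁ = t₂ ∧ t₁ ≤ n then 1 else 0 := by
  by_cases h : t₁ = t₂
  · subst h
    have e : ∀ c : Option (Fin n),
        (if iot n c = t₁ then (1:ℤ) else 0) * (if iot n c = t₁ then 1 else 0)
        = (if iot n c = t₁ then (1:ℤ) else 0) := by
      intro c; split_ifs <;> ring
    rw [Finset.sum_congr rfl (fun c _ => e c), sum_iot n t₁ (fun _ => (1:ℤ))]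
    split_ifs <;> simp_all
  · rw [if_neg (by tauto)]
    apply Finset.sum_eq_zero
    intro c _
    split_ifs <;> simp_all

lemma Cartan_eq : (matA n)ᵀ * matA n = CartanA n := by
  ext k l
  rw [Matrix.mul_apply]
  have expand : ∀ c, (matA n)ᵀ k c * matA n c l
      = (if iot n c = (k:ℕ) then (1:ℤ) else 0) * (if iot n c = (l:ℕ) then 1 else 0)
        - (if iot n c = (k:ℕ) then (1:ℤ) else 0) * (if iot n c = (l:ℕ)+1 then 1 else 0)
        - (if iot n c = (k:ℕ)+1 then (1:ℤ) else 0) * (if iot n c = (l:ℕ) then 1 else 0)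
        + (if iot n c = (k:ℕ)+1 then (1:ℤ) else 0) * (if iot n c = (l:ℕ)+1 then 1 else 0) := by
    intro c; simp only [Matrix.transpose_apply]; unfold matA; ring
  rw [Finset.sum_congr rfl (fun c _ => expand c)]
  simp only [Finset.sum_add_distrib, Finset.sum_sub_distrib, sum_iot_pair]
  have hk := k.isLt; have hl := l.isLt
  have hkl : (k = l) ↔ ((k:ℕ) = (l:ℕ)) := Fin.val_inj.symm
  unfold CartanA
  simp only [hkl]
  split_ifs <;> omega

lemma A_cancel (Z : Matrix (Fin n) (Fin n) ℤ) (h : matA n * Z = 0) : Z = 0 := by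
  have hcol : ∀ (k : Fin n) (c : Option (Fin n)), ∑ m : Fin n, matA n c m * Z m k = 0 := by
    intro k c
    have := congrFun (congrFun h c) k
    rwa [Matrix.mul_apply] at this
  have key : ∀ (j : ℕ) (hj : j < n) (k : Fin n), Z ⟨j, hj⟩ k = 0 := by
    intro j
    induction j with
    | zero =>
      intro hj k
      have h0 := hcol k (some ⟨0, hj⟩)
      have e : ∀ m : Fin n, matA n (some ⟨0, hj⟩) m * Z m k
          = (if (0:ℕ) = (m:ℕ) then Z m k else 0) - (if (0:ℕ) = (m:ℕ)+1 then Z m k else 0) := by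
        intro m; unfold matA; simp only [iot, Option.elim]
        split_ifs <;> simp_all <;> omega
      rw [Finset.sum_congr rfl (fun m _ => e m), Finset.sum_sub_distrib,
        sum_ind n 0 (fun m => Z m k), sum_ind2 n 0 (fun m => Z m k)] at h0
      simpa [hj] using h0
    | succ p ih =>
      intro hj k
      have h0 := hcol k (some ⟨p+1, hj⟩)
      have e : ∀ m : Fin n, matA n (some ⟨p+1, hj⟩) m * Z m k
          = (if (p+1:ℕ) = (m:ℕ) then Z m k else 0) - (if (p+1:ℕ) = (m:ℕ)+1 then Z m k else 0) := by
        intro m; unfold matA; simp only [iot, Option.elim]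
        split_ifs <;> simp_all <;> omega
      rw [Finset.sum_congr rfl (fun m _ => e m), Finset.sum_sub_distrib,
        sum_ind n (p+1) (fun m => Z m k), sum_ind2 n (p+1) (fun m => Z m k)] at h0
      rw [dif_pos hj, dif_pos (by omega : 0 < p+1 ∧ p+1 ≤ n)] at h0
      have hzp : Z ⟨p+1-1, by omega⟩ k = 0 := ih (by omega) k
      rw [hzp] at h0
      linarith
  ext m k
  have := key m.val m.isLt k
  simpa using this

end aux3
section aux4
variable (n : ℕ) (V₁ : Finset (Fin n)) (s : Fin n)

lemma sum_opt_pair (a b : Option (Fin n)) :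
    ∑ c : Option (Fin n), (if c = a then (1:ℤ) else 0) * (if c = b then 1 else 0)
      = if a = b then 1 else 0 := by
  have e : ∀ c : Option (Fin n), (if c = a then (1:ℤ) else 0) * (if c = b then 1 else 0)
      = (if c = a then (if c = b then (1:ℤ) else 0) else 0) := by
    intro c; split_ifs <;> ring
  rw [Finset.sum_congr rfl (fun c _ => e c), Finset.sum_ite_eq' Finset.univ a]
  simp

lemma sum_EE (i j : Fin n) :
    ∑ c : Option (Fin n), matE n V₁ s c i * matE n V₁ s c j
      = (if ff n V₁ s i = ff n V₁ s j then 1 else 0)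
        - (if ff n V₁ s i = gg n s j then 1 else 0)
        - (if gg n s i = ff n V₁ s j then 1 else 0)
        + (if gg n s i = gg n s j then 1 else 0) := by
  have e : ∀ c : Option (Fin n), matE n V₁ s c i * matE n V₁ s c j
      = (if c = ff n V₁ s i then (1:ℤ) else 0) * (if c = ff n V₁ s j then 1 else 0)
        - (if c = ff n V₁ s i then (1:ℤ) else 0) * (if c = gg n s j then 1 else 0)
        - (if c = gg n s i then (1:ℤ) else 0) * (if c = ff n V₁ s j then 1 else 0)
        + (if c = gg n s i then (1:ℤ) else 0) * (if c = gg n s j then 1 else 0) := by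
    intro c; unfold matE; ring
  rw [Finset.sum_congr rfl (fun c _ => e c)]
  simp only [Finset.sum_add_distrib, Finset.sum_sub_distrib, sum_opt_pair]

def dl (X₁ X₂ : Finset (Fin n)) : Fin n → ℤ := fun i =>
  if i ∈ V₁ then (if i ∈ X₁ then 1 else -1)
  else (if i ∈ X₂ then 1 else -1) *
    (-((if s ∈ X₁ then 1 else -1) * (if s ∈ X₂ then (1:ℤ) else -1)))

def matD (X₁ X₂ : Finset (Fin n)) : Matrix (Fin n) (Fin n) ℤ :=
  Matrix.diagonal (dl n V₁ s X₁ X₂)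

lemma dl_sq (X₁ X₂ : Finset (Fin n)) (i : Fin n) :
    dl n V₁ s X₁ X₂ i * dl n V₁ s X₁ X₂ i = 1 := by
  unfold dl; split_ifs <;> ring

lemma D_mul_D (X₁ X₂ : Finset (Fin n)) : matD n V₁ s X₁ X₂ * matD n V₁ s X₁ X₂ = 1 := by
  rw [matD, Matrix.diagonal_mul_diagonal]
  have e : (fun i => dl n V₁ s X₁ X₂ i * dl n V₁ s X₁ X₂ i) = fun _ => (1:ℤ) :=
    funext (dl_sq n V₁ s X₁ X₂)
  rw [e, Matrix.diagonal_one]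

lemma D_transpose (X₁ X₂ : Finset (Fin n)) : (matD n V₁ s X₁ X₂)ᵀ = matD n V₁ s X₁ X₂ :=
  Matrix.diagonal_transpose _

set_option maxHeartbeats 1000000 in
lemma glue2_eq (V₂ X₁ X₂ : Finset (Fin n)) (hs1 : s ∈ V₁) (hs2 : s ∈ V₂)
    (hcov : V₁ ∪ V₂ = Finset.univ) (hint : V₁ ∩ V₂ = {s}) :
    glue2 V₁ V₂ X₁ X₂
      = matD n V₁ s X₁ X₂ * ((matE n V₁ s)ᵀ * matE n V₁ s) * matD n V₁ s X₁ X₂ := by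
  have hV2 : ∀ x : Fin n, x ∉ V₁ → x ∈ V₂ := by
    intro x hx
    have hx2 : x ∈ V₁ ∪ V₂ := by rw [hcov]; exact Finset.mem_univ x
    rcases Finset.mem_union.mp hx2 with h | h
    · exact absurd h hx
    · exact h
  have hS : ∀ x : Fin n, x ∈ V₁ → x ∈ V₂ → x = s := by
    intro x h1 h2
    have hx : x ∈ V₁ ∩ V₂ := Finset.mem_inter.mpr ⟨h1, h2⟩
    rw [hint] at hx
    exact Finset.mem_singleton.mp hx
  ext i j
  rw [matD, Matrix.mul_diagonal, Matrix.diagonal_mul, Matrix.mul_apply]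
  simp only [Matrix.transpose_apply]
  rw [sum_EE]
  by_cases hij : i = j
  · subst hij
    have h1 : ff n V₁ s i ≠ gg n s i := by
      unfold ff gg; split_ifs <;> simp_all [eq_comm]
    have h2 : gg n s i ≠ ff n V₁ s i := fun hh => h1 hh.symm
    rw [if_pos rfl, if_pos rfl, if_neg h1, if_neg h2]
    have hd := dl_sq n V₁ s X₁ X₂ i
    have hg : glue2 V₁ V₂ X₁ X₂ i i = 2 := by simp [glue2]
    rw [hg]
    linear_combination (-2) * hd
  · by_cases hi : i ∈ V₁ <;> by_cases hj : j ∈ V₁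
    · -- both in V₁
      have e1 : ff n V₁ s i = ff n V₁ s j := by simp [ff, hi, hj]
      have e2 : ff n V₁ s i ≠ gg n s j := by
        unfold ff gg; split_ifs <;> simp_all [eq_comm]
      have e3 : gg n s i ≠ ff n V₁ s j := by
        unfold ff gg; split_ifs <;> simp_all [eq_comm]
      have e4 : gg n s i ≠ gg n s j := by
        unfold gg; split_ifs <;> simp_all [eq_comm]
      rw [if_pos e1, if_neg e2, if_neg e3, if_neg e4]
      have hg : glue2 V₁ V₂ X₁ X₂ i j
          = (if (i ∈ X₁ ↔ j ∈ X₁) then 1 else -1) := by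
        simp [glue2, hij, hi, hj]
      rw [hg]
      unfold dl
      rw [if_pos hi, if_pos hj]
      split_ifs <;> first | ring1 | (exfalso; tauto)
    · -- i ∈ V₁, j ∉ V₁
      have hj2 : j ∈ V₂ := hV2 j hj
      have hjs : ¬ j = s := fun h => hj (h ▸ hs1)
      have e1 : ff n V₁ s i ≠ ff n V₁ s j := by simp [ff, hi, hj]
      have e2 : ff n V₁ s i ≠ gg n s j := by
        unfold ff gg; split_ifs <;> simp_all [eq_comm]
      have e4 : gg n s i ≠ gg n s j := by
        unfold gg; split_ifs <;> simp_all [eq_comm]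
      rw [if_neg e1, if_neg e2, if_neg e4]
      by_cases his : i = s
      · have e3 : gg n s i = ff n V₁ s j := by simp [gg, ff, his, hj]
        rw [if_pos e3]
        have hiV2 : i ∈ V₂ := his.symm ▸ hs2
        have hg : glue2 V₁ V₂ X₁ X₂ i j
            = (if (i ∈ X₂ ↔ j ∈ X₂) then 1 else -1) := by
          have hni : ¬ (i ∈ V₁ ∧ j ∈ V₁) := fun h => hj h.2
          simp [glue2, hij, hni, hiV2, hj2]
        rw [hg]
        unfold dl
        rw [if_pos hi, if_neg hj]
        subst his
        split_ifs <;> first | ring1 | (exfalso; tauto)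
      · have hiV2 : i ∉ V₂ := fun h => his (hS i hi h)
        have e3 : gg n s i ≠ ff n V₁ s j := by
          unfold ff gg; split_ifs <;> simp_all [eq_comm]
        rw [if_neg e3]
        have hg : glue2 V₁ V₂ X₁ X₂ i j = 0 := by
          have hn1 : ¬ (i ∈ V₁ ∧ j ∈ V₁) := fun h => hj h.2
          have hn2 : ¬ (i ∈ V₂ ∧ j ∈ V₂) := fun h => hiV2 h.1
          simp [glue2, hij, hn1, hn2]
        rw [hg]; ring
    · -- i ∉ V₁, j ∈ V₁  (mirror)
      have hi2 : i ∈ V₂ := hV2 i hi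
      have his : ¬ i = s := fun h => hi (h ▸ hs1)
      have e1 : ff n V₁ s i ≠ ff n V₁ s j := by simp [ff, hi, hj]
      have e3 : gg n s i ≠ ff n V₁ s j := by
        unfold ff gg; split_ifs <;> simp_all [eq_comm]
      have e4 : gg n s i ≠ gg n s j := by
        unfold gg; split_ifs <;> simp_all [eq_comm]
      rw [if_neg e1, if_neg e3, if_neg e4]
      by_cases hjs : j = s
      · have e2 : ff n V₁ s i = gg n s j := by simp [ff, gg, hjs, hi]
        rw [if_pos e2]
        have hjV2 : j ∈ V₂ := hjs.symm ▸ hs2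
        have hg : glue2 V₁ V₂ X₁ X₂ i j
            = (if (i ∈ X₂ ↔ j ∈ X₂) then 1 else -1) := by
          have hn1 : ¬ (i ∈ V₁ ∧ j ∈ V₁) := fun h => hi h.1
          simp [glue2, hij, hn1, hi2, hjV2]
        rw [hg]
        unfold dl
        rw [if_neg hi, if_pos hj]
        subst hjs
        split_ifs <;> first | ring1 | (exfalso; tauto)
      · have hjV2 : j ∉ V₂ := fun h => hjs (hS j hj h)
        have e2 : ff n V₁ s i ≠ gg n s j := by
          unfold ff gg; split_ifs <;> simp_all [eq_comm]
        rw [if_neg e2]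
        have hg : glue2 V₁ V₂ X₁ X₂ i j = 0 := by
          have hn1 : ¬ (i ∈ V₁ ∧ j ∈ V₁) := fun h => hi h.1
          have hn2 : ¬ (i ∈ V₂ ∧ j ∈ V₂) := fun h => hjV2 h.2
          simp [glue2, hij, hn1, hn2]
        rw [hg]; ring
    · -- both outside V₁
      have hi2 : i ∈ V₂ := hV2 i hi
      have hj2 : j ∈ V₂ := hV2 j hj
      have his : ¬ i = s := fun h => hi (h ▸ hs1)
      have hjs : ¬ j = s := fun h => hj (h ▸ hs1)
      have e1 : ff n V₁ s i = ff n V₁ s j := by simp [ff, hi, hj]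
      have e2 : ff n V₁ s i ≠ gg n s j := by
        unfold ff gg; split_ifs <;> simp_all [eq_comm]
      have e3 : gg n s i ≠ ff n V₁ s j := by
        unfold ff gg; split_ifs <;> simp_all [eq_comm]
      have e4 : gg n s i ≠ gg n s j := by
        unfold gg; split_ifs <;> simp_all [eq_comm]
      rw [if_pos e1, if_neg e2, if_neg e3, if_neg e4]
      have hg : glue2 V₁ V₂ X₁ X₂ i j
          = (if (i ∈ X₂ ↔ j ∈ X₂) then 1 else -1) := by
        have hn1 : ¬ (i ∈ V₁ ∧ j ∈ V₁) := fun h => hi h.1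
        simp [glue2, hij, hn1, hi2, hj2]
      rw [hg]
      unfold dl
      rw [if_neg hi, if_neg hj]
      split_ifs <;> first | ring1 | (exfalso; tauto)

end aux4
theorem stmt11 (n : ℕ) (V₁ V₂ X₁ X₂ : Finset (Fin n)) (s : Fin n)
    (hcov : V₁ ∪ V₂ = Finset.univ) (hint : V₁ ∩ V₂ = {s})
    (hX₁ : X₁ ⊆ V₁) (hX₂ : X₂ ⊆ V₂) :
    ZEquiv (glue2 V₁ V₂ X₁ X₂) (CartanA n) := by
  have hsV : s ∈ V₁ ∩ V₂ := by rw [hint]; exact Finset.mem_singleton_self s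
  have hs1 : s ∈ V₁ := (Finset.mem_inter.mp hsV).1
  have hs2 : s ∈ V₂ := (Finset.mem_inter.mp hsV).2
  set A := matA n with hA'
  set E := matE n V₁ s with hE'
  set M := matM n V₁ s with hM'
  set N := matN n V₁ s with hN'
  set D := matD n V₁ s X₁ X₂ with hD'
  have hE : E = A * M := E_eq n V₁ s
  have hA : A = E * N := A_eq n V₁ s hs1
  have hMN : M * N = 1 := by
    have h2 : A * (M * N) = A * (1 : Matrix (Fin n) (Fin n) ℤ) := by
      rw [Matrix.mul_one, ← Matrix.mul_assoc, ← hE, ← hA]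
    have h3 : A * (M * N - 1) = 0 := by
      rw [Matrix.mul_sub, h2, Matrix.mul_one, sub_self]
    have h4 := A_cancel n _ h3
    exact sub_eq_zero.mp h4
  have hNM : N * M = 1 := mul_eq_one_comm.mp hMN
  have hDD : D * D = 1 := D_mul_D n V₁ s X₁ X₂
  have hDT : Dᵀ = D := D_transpose n V₁ s X₁ X₂
  have hC : Aᵀ * A = CartanA n := Cartan_eq n
  have hG : glue2 V₁ V₂ X₁ X₂ = D * (Eᵀ * E) * D :=
    glue2_eq n V₁ s V₂ X₁ X₂ hs1 hs2 hcov hint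
  refine ⟨D * N, M * D, ?_, ?_, ?_⟩
  · rw [Matrix.mul_assoc, ← Matrix.mul_assoc N, hNM, Matrix.one_mul, hDD]
  · rw [Matrix.mul_assoc, ← Matrix.mul_assoc D, hDD, Matrix.one_mul, hMN]
  · rw [hG, hE]
    have hNMT : Nᵀ * Mᵀ = 1 := by
      rw [← Matrix.transpose_mul, hMN, Matrix.transpose_one]
    have hDD' : ∀ X : Matrix (Fin n) (Fin n) ℤ, D * (D * X) = X := by
      intro X; rw [← Matrix.mul_assoc, hDD, Matrix.one_mul]
    calc CartanA n = Aᵀ * A := hC.symm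
      _ = (Nᵀ * Mᵀ) * (Aᵀ * A) * (M * N) := by rw [hNMT, hMN, Matrix.one_mul, Matrix.mul_one]
      _ = (D * N)ᵀ * (D * ((A * M)ᵀ * (A * M)) * D) * (D * N) := by
        simp only [Matrix.transpose_mul, hDT, Matrix.mul_assoc, hDD']
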